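/- arXiv:1711.03883 — 2 statements merged into one kernel-verified Lean document; each statement's English description precedes it below -/
import Mathlib

section
/- On the manifold M = S¹ × ℝ with the constant cone field C(θ,x) = ([0,∞) × [0,∞)) \ {(0,0)} ⊆ T_{(θ,x)}M ≅ ℝ², a continuous function f : M → ℝ is causal if and only if there exists a nondecreasing function g : ℝ → ℝ such that f(θ,x) = g(x) for all (θ,x). -/
open Set MeasureTheory

noncomputable section

open scoped Topology

/-- Key analytic lemma: a Lipschitz function on `[a, b]` whose derivative is a.e.
nonnegative satisfies `h a ≤ h b`. -/
lemma aux_le_of_ae_deriv_nonneg {h : ℝ → ℝ} {K : NNReal} {a b : ℝ}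
    (hab : a ≤ b) (hlip : LipschitzOnWith K h (Set.Icc a b))
    (hae : ∀ᵐ t ∂(volume.restrict (Set.Icc a b)),
      DifferentiableAt ℝ h t ∧ 0 ≤ deriv h t) : h a ≤ h b := by
  have hcont : ContinuousOn h (Icc a b) := hlip.continuousOn
  have main : ∀ ε : ℝ, 0 < ε → h a - h b ≤ ε * ((b - a) + ((K : ℝ) + 1)) := by
    intro ε hε
    set P : ℝ → Prop := fun t => DifferentiableAt ℝ h t ∧ 0 ≤ deriv h t with hP
    have hN : volume ({t | ¬ P t} ∩ Icc a b) = 0 := by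
      rw [← Measure.restrict_apply' measurableSet_Icc]
      exact hae
    obtain ⟨U, hNU, hUopen, hUvol⟩ :=
      Set.exists_isOpen_lt_of_lt _ (ENNReal.ofReal ε)
        (by rw [hN]; exact ENNReal.ofReal_pos.2 hε)
    set v : ℝ → ℝ := fun t => (volume (U ∩ Set.Ioc a t)).toReal with hv
    have hUmeas : MeasurableSet U := hUopen.measurableSet
    have hfin : ∀ s : Set ℝ, s ⊆ U → volume s ≠ ⊤ :=
      fun s hs => ((measure_mono hs).trans_lt (hUvol.trans_le le_top)).ne
    have vadd : ∀ s t : ℝ, a ≤ s → s ≤ t →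
        v t = v s + (volume (U ∩ Set.Ioc s t)).toReal := by
      intro s t has hst
      have hsplit : U ∩ Set.Ioc a t = (U ∩ Set.Ioc a s) ∪ (U ∩ Set.Ioc s t) := by
        rw [← Set.inter_union_distrib_left, Set.Ioc_union_Ioc_eq_Ioc has hst]
      have hdisj : Disjoint (U ∩ Set.Ioc a s) (U ∩ Set.Ioc s t) := by
        apply Set.disjoint_left.2
        rintro x ⟨-, hx1⟩ ⟨-, hx2⟩
        exact absurd hx2.1 (not_lt.2 hx1.2)
      have : volume (U ∩ Set.Ioc a t)
          = volume (U ∩ Set.Ioc a s) + volume (U ∩ Set.Ioc s t) := by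
        rw [hsplit]
        exact measure_union hdisj (hUmeas.inter measurableSet_Ioc)
      simp only [hv, this]
      rw [ENNReal.toReal_add (hfin _ Set.inter_subset_left) (hfin _ Set.inter_subset_left)]
    have vbound : ∀ s t : ℝ, s ≤ t → (volume (U ∩ Set.Ioc s t)).toReal ≤ t - s := by
      intro s t hst
      have h1 : volume (U ∩ Set.Ioc s t) ≤ ENNReal.ofReal (t - s) := by
        refine (measure_mono Set.inter_subset_right).trans ?_
        rw [Real.volume_Ioc]
      calc (volume (U ∩ Set.Ioc s t)).toReal ≤ (ENNReal.ofReal (t - s)).toReal :=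
            ENNReal.toReal_mono ENNReal.ofReal_ne_top h1
        _ ≤ t - s := by rw [ENNReal.toReal_ofReal']; exact max_le le_rfl (by linarith)
    have vcont : ContinuousOn v (Icc a b) := by
      apply LipschitzOnWith.continuousOn (K := 1)
      apply LipschitzOnWith.of_dist_le_mul
      intro s hs t ht
      rw [NNReal.coe_one, one_mul, Real.dist_eq, Real.dist_eq]
      rcases le_total t s with hts | hst
      · have h1 := vbound t s hts
        have h2 : (0:ℝ) ≤ (volume (U ∩ Set.Ioc t s)).toReal := ENNReal.toReal_nonneg
        have h3 := vadd t s ht.1 hts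
        rw [abs_of_nonneg (by linarith : (0:ℝ) ≤ s - t), abs_le]
        constructor <;> linarith
      · have h1 := vbound s t hst
        have h2 : (0:ℝ) ≤ (volume (U ∩ Set.Ioc s t)).toReal := ENNReal.toReal_nonneg
        have h3 := vadd s t hs.1 hst
        rw [abs_of_nonpos (by linarith : s - t ≤ (0:ℝ)), abs_le]
        constructor <;> linarith
    set S : Set ℝ := {t | h a - h t ≤ ε * (t - a) + ((K : ℝ) + 1) * v t} with hS
    have Sclosed : IsClosed (S ∩ Icc a b) := by
      have hFcont : ContinuousOn
          (fun t => h a - h t - (ε * (t - a) + ((K : ℝ) + 1) * v t)) (Icc a b) := by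
        apply ContinuousOn.sub
        · exact continuousOn_const.sub hcont
        · exact ((continuousOn_const.mul ((continuousOn_id).sub continuousOn_const)).add
            (continuousOn_const.mul vcont))
      have : S ∩ Icc a b = Icc a b ∩ (fun t =>
          h a - h t - (ε * (t - a) + ((K : ℝ) + 1) * v t)) ⁻¹' (Iic 0) := by
        ext t
        simp only [hS, Set.mem_inter_iff, Set.mem_setOf_eq, Set.mem_preimage, Set.mem_Iic,
          sub_nonpos]
        tauto
      rw [this]
      exact hFcont.preimage_isClosed_of_isClosed isClosed_Icc isClosed_Iic
    have haS : a ∈ S := by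
      simp only [hS, Set.mem_setOf_eq, sub_self, mul_zero, zero_add]
      have : v a = 0 := by simp [hv]
      rw [this]
      simp
    have step : ∀ x ∈ S ∩ Set.Ico a b, ∀ y ∈ Set.Ioi x, (S ∩ Set.Ioc x y).Nonempty := by
      rintro x ⟨hxS, hxab⟩ y hxy
      by_cases hxU : x ∈ U
      · -- bad point: inside the open set U, use the Lipschitz bound
        obtain ⟨δ, hδ, hball⟩ := Metric.isOpen_iff.1 hUopen x hxU
        set z := min (min (x + δ/2) y) b with hz
        have hxz : x < z := by
          simp only [hz, lt_min_iff]
          exact ⟨⟨by linarith, hxy⟩, hxab.2⟩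
        have hzy : z ≤ y := (min_le_left _ _).trans (min_le_right _ _)
        have hzb : z ≤ b := min_le_right _ _
        have hzIcc : z ∈ Icc a b := ⟨hxab.1.trans hxz.le, hzb⟩
        have hsub : Set.Ioc x z ⊆ U := by
          intro w hw
          apply hball
          rw [Metric.mem_ball, Real.dist_eq, abs_lt]
          have : z ≤ x + δ/2 := (min_le_left _ _).trans (min_le_left _ _)
          constructor <;> [linarith [hw.1]; linarith [hw.2]]
        have hvz : v z = v x + (z - x) := by
          rw [vadd x z hxab.1 hxz.le, Set.inter_eq_self_of_subset_right hsub,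
            Real.volume_Ioc, ENNReal.toReal_ofReal (by linarith)]
        have hlipb : h x - h z ≤ (K : ℝ) * (z - x) := by
          have h0 := hlip.dist_le_mul x ⟨hxab.1, hxab.2.le⟩ z hzIcc
          rw [Real.dist_eq, Real.dist_eq, abs_sub_comm x z,
            abs_of_nonneg (by linarith : (0:ℝ) ≤ z - x)] at h0
          calc h x - h z ≤ |h x - h z| := le_abs_self _
            _ ≤ (K : ℝ) * (z - x) := h0
        refine ⟨z, ?_, hxz, hzy⟩
        simp only [hS, Set.mem_setOf_eq] at hxS ⊢
        have hK0 : (0:ℝ) ≤ (K : ℝ) := K.coe_nonneg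
        rw [hvz]
        nlinarith [hxS, hε, hxz]
      · -- good point: use the derivative
        have hPx : P x := by
          by_contra hc
          exact hxU (hNU ⟨hc, hxab.1, hxab.2.le⟩)
        obtain ⟨hdiff, hderiv⟩ := hPx
        have htend : Filter.Tendsto (slope h x) (𝓝[>] x) (𝓝 (deriv h x)) :=
          (hasDerivAt_iff_tendsto_slope.1 hdiff.hasDerivAt).mono_left
            (nhdsWithin_mono x fun w hw => by
              simp only [Set.mem_compl_iff, Set.mem_singleton_iff]
              exact ne_of_gt hw)
        have hev1 : ∀ᶠ z in 𝓝[>] x, -ε < slope h x z :=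
          htend.eventually (eventually_gt_nhds (by linarith))
        have hev2 : Set.Ioc x (min y b) ∈ 𝓝[>] x :=
          Ioc_mem_nhdsGT_of_mem ⟨le_rfl, lt_min hxy hxab.2⟩
        obtain ⟨z, hz1, hz2⟩ := (hev1.and hev2).exists
        have hxz : x < z := hz2.1
        have hzy : z ≤ y := hz2.2.trans (min_le_left _ _)
        have hslope : -ε * (z - x) < h z - h x := by
          have := hz1
          rw [slope_def_field] at this
          calc -ε * (z - x) < (h z - h x) / (z - x) * (z - x) := by
                apply mul_lt_mul_of_pos_right _ (by linarith)
                exact this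
            _ = h z - h x := div_mul_cancel₀ _ (by linarith)
        have hvz : v x ≤ v z := by
          rw [vadd x z hxab.1 hxz.le]
          have : (0:ℝ) ≤ (volume (U ∩ Set.Ioc x z)).toReal := ENNReal.toReal_nonneg
          linarith
        refine ⟨z, ?_, hxz, hzy⟩
        simp only [hS, Set.mem_setOf_eq] at hxS ⊢
        have hK0 : (0:ℝ) ≤ (K : ℝ) := K.coe_nonneg
        nlinarith [hxS, hε, hxz]
    have hsub : Icc a b ⊆ S := Sclosed.Icc_subset_of_forall_exists_gt haS step
    have hbS : b ∈ S := hsub ⟨hab, le_rfl⟩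
    simp only [hS, Set.mem_setOf_eq] at hbS
    have hvb : v b ≤ ε := by
      apply ENNReal.toReal_le_of_le_ofReal hε.le
      exact ((measure_mono Set.inter_subset_left).trans_lt hUvol).le
    have hK0 : (0:ℝ) ≤ (K : ℝ) := K.coe_nonneg
    nlinarith [hbS, hvb, hε]
  by_contra hcon
  push_neg at hcon
  set C : ℝ := (b - a) + ((K : ℝ) + 1) with hC
  have hCpos : 0 < C := by
    have hK0 : (0:ℝ) ≤ (K : ℝ) := K.coe_nonneg
    simp only [hC]; linarith
  have := main ((h a - h b) / (2 * C)) (div_pos (by linarith) (by linarith))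
  rw [div_mul_eq_mul_div, mul_div_assoc] at this
  have h2 : C / (2 * C) = 1/2 := by field_simp
  rw [h2] at this
  linarith

/-- The circle `ℝ/ℤ`. -/
abbrev S1 := AddCircle (1 : ℝ)

/-- Projection of a lift to `S¹ × ℝ`. -/
def pr (p : ℝ × ℝ) : S1 × ℝ := ((p.1 : S1), p.2)

/-- The constant cone `([0,∞) × [0,∞)) \\ {0}`. -/
def coneQ : Set (ℝ × ℝ) := {v | 0 ≤ v.1 ∧ 0 ≤ v.2 ∧ v ≠ 0}

/-- A causal curve in `S¹ × ℝ`, described by a Lipschitz lift whose derivative lies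
almost everywhere in the cone (or vanishes). -/
def IsCausalLift (γ : ℝ → ℝ × ℝ) (a b : ℝ) : Prop :=
  (∃ K : NNReal, LipschitzOnWith K γ (Set.Icc a b)) ∧
  ∀ᵐ t ∂(volume.restrict (Set.Icc a b)),
    DifferentiableAt ℝ γ t ∧ deriv γ t ∈ insert (0 : ℝ × ℝ) coneQ

/-- The causal future of a point of `S¹ × ℝ`. -/
def causalFutureQ (p : S1 × ℝ) : Set (S1 × ℝ) :=
  insert p {q | ∃ a b : ℝ, a < b ∧ ∃ γ : ℝ → ℝ × ℝ, IsCausalLift γ a b ∧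
    pr (γ a) = p ∧ pr (γ b) = q ∧ ∃ s ∈ Set.Icc a b, ∃ t ∈ Set.Icc a b, pr (γ s) ≠ pr (γ t)}

/-- A causal function on `S¹ × ℝ`. -/
def IsCausalFunQ (f : S1 × ℝ → ℝ) : Prop :=
  Continuous f ∧ ∀ p : S1 × ℝ, ∀ q ∈ causalFutureQ p, f p ≤ f q

/-- The basic causal curve: a straight line with slope `(1, m)`, `m ≥ 0`. -/
lemma aux_causal_step (f : S1 × ℝ → ℝ) (hC : IsCausalFunQ f)
    (θ θ' : S1) (x x' : ℝ) (hxx : x ≤ x') : f (θ, x) ≤ f (θ', x') := by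
  obtain ⟨u, rfl⟩ := QuotientAddGroup.mk_surjective θ
  obtain ⟨vv, rfl⟩ := QuotientAddGroup.mk_surjective θ'
  set n : ℤ := ⌊u - vv⌋ + 1 with hn
  set w : ℝ := vv + n with hw
  have huw : u < w := by
    have := Int.lt_floor_add_one (u - vv)
    simp only [hw, hn]
    push_cast
    linarith
  have hwS : ((w : ℝ) : S1) = ((vv : ℝ) : S1) := by
    rw [hw, AddCircle.coe_add, add_eq_left, AddCircle.coe_eq_zero_iff]
    exact ⟨n, by simp⟩
  set m : ℝ := (x' - x) / (w - u) with hm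
  have hm0 : 0 ≤ m := div_nonneg (by linarith) (by linarith)
  set γ : ℝ → ℝ × ℝ := fun t => (t, x + m * (t - u)) with hγ
  have hderivγ : ∀ t, HasDerivAt γ (1, m) t := by
    intro t
    have h2 : HasDerivAt (fun t : ℝ => x + m * (t - u)) (m * 1) t :=
      (((hasDerivAt_id t).sub_const u).const_mul m).const_add x
    rw [mul_one] at h2
    exact HasDerivAt.prodMk (hasDerivAt_id t) h2
  have hmem : (((vv:ℝ):S1), x') ∈ causalFutureQ (((u:ℝ):S1), x) := by
    right
    refine ⟨u, w, huw, γ, ⟨⟨⟨max 1 |m|, le_trans zero_le_one (le_max_left _ _)⟩, ?_⟩, ?_⟩, ?_, ?_, ?_⟩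
    · apply LipschitzWith.lipschitzOnWith
      apply LipschitzWith.of_dist_le_mul
      intro s t
      have : dist (γ s) (γ t) = max (dist s t) (dist (x + m * (s - u)) (x + m * (t - u))) := by
        rfl
      rw [this]
      apply max_le
      · calc dist s t = 1 * dist s t := (one_mul _).symm
          _ ≤ max 1 |m| * dist s t := by
              apply mul_le_mul_of_nonneg_right (le_max_left _ _) dist_nonneg
      · rw [Real.dist_eq, Real.dist_eq]
        have : x + m * (s - u) - (x + m * (t - u)) = m * (s - t) := by ring
        rw [this, abs_mul]
        apply mul_le_mul_of_nonneg_right (le_max_right _ _) (abs_nonneg _)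
    · apply Filter.Eventually.of_forall
      intro t
      refine ⟨(hderivγ t).differentiableAt, ?_⟩
      rw [(hderivγ t).deriv]
      right
      exact ⟨zero_le_one, hm0, fun hc => by simpa using congrArg Prod.fst hc⟩
    · simp [pr, hγ]
    · have : γ w = (w, x') := by
        simp only [hγ]
        congr 1
        rw [hm, div_mul_cancel₀ _ (by linarith : w - u ≠ 0)]
        ring
      rw [this]
      simp only [pr, hwS]
    · refine ⟨u, ⟨le_rfl, huw.le⟩, min w (u + 2⁻¹), ⟨le_min huw.le (by linarith), min_le_left _ _⟩, ?_⟩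
      intro hc
      have h1 : ((u:ℝ):S1) = ((min w (u + 2⁻¹) : ℝ) : S1) :=
        (by simpa [pr, hγ, Prod.ext_iff] using hc : _ ∧ _).1
      set t := min w (u + 2⁻¹) with ht
      have hut : u < t := lt_min huw (by linarith)
      have htu : t - u ≤ 2⁻¹ := by
        have : t ≤ u + 2⁻¹ := min_le_right _ _
        linarith
      have : ((t - u : ℝ) : S1) = 0 := by
        rw [AddCircle.coe_sub, ← h1, sub_self]
      rw [AddCircle.coe_eq_zero_iff] at this
      obtain ⟨k, hk⟩ := this
      rw [zsmul_eq_mul, mul_one] at hk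
      have hk0 : (0:ℝ) < k := by rw [hk]; linarith
      have hkz : (0:ℤ) < k := by exact_mod_cast hk0
      have hk1 : (1:ℝ) ≤ k := by exact_mod_cast hkz
      rw [hk] at hk1
      linarith
  exact hC.2 _ _ hmem

/-- A continuous function on `S¹ × ℝ` is causal iff it is of the form `g(x)` with `g`
nondecreasing. -/
theorem causal_iff_monotone_of_snd (f : S1 × ℝ → ℝ) (hf : Continuous f) :
    IsCausalFunQ f ↔ ∃ g : ℝ → ℝ, Monotone g ∧ ∀ p : S1 × ℝ, f p = g p.2 := by
  constructor
  · intro hC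
    refine ⟨fun x => f (0, x), fun x x' hxx => aux_causal_step f hC 0 0 x x' hxx, ?_⟩
    intro p
    have h1 : f p = f (p.1, p.2) := by rw [Prod.mk.eta]
    rw [h1]
    exact le_antisymm (aux_causal_step f hC p.1 0 p.2 p.2 le_rfl)
      (aux_causal_step f hC 0 p.1 p.2 p.2 le_rfl)
  · rintro ⟨g, hg, hfg⟩
    refine ⟨hf, ?_⟩
    intro p q hq
    rcases hq with rfl | ⟨a, b, hab, γ, ⟨⟨K, hK⟩, haed⟩, hpa, hpb, -⟩
    · exact le_rfl
    have key : (γ a).2 ≤ (γ b).2 := by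
      apply aux_le_of_ae_deriv_nonneg (K := 1 * K) hab.le
      · exact LipschitzWith.prod_snd.comp_lipschitzOnWith hK
      · filter_upwards [haed] with t ⟨hdiff, hmem⟩
        have hd : HasDerivAt (fun s => (γ s).2) (deriv γ t).2 t := by
          have := (hasFDerivAt_snd (𝕜 := ℝ) (E := ℝ) (F := ℝ)
            (p := γ t)).comp_hasDerivAt t hdiff.hasDerivAt
          exact this
        refine ⟨hd.differentiableAt, ?_⟩
        rw [hd.deriv]
        rcases hmem with hmem | hmem
        · rw [hmem]; exact le_rfl
        · exact hmem.2.1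
    have hpa2 : p.2 = (γ a).2 := (congrArg Prod.snd hpa).symm
    have hpb2 : q.2 = (γ b).2 := (congrArg Prod.snd hpb).symm
    rw [hfg p, hfg q, hpa2, hpb2]
    exact hg key

end
end

section
/- On M = S¹ × ℝ with the cone field C(θ,x) = ([0,∞)×[0,∞)) \ {(0,0)}, a causal function f is special causal if and only if f is constant. -/
open Set MeasureTheory

noncomputable section

/-- A neutral point of `f` on `S¹ × ℝ`. -/
def IsNeutralPtQ (f : S1 × ℝ → ℝ) (p : S1 × ℝ) : Prop :=
  ∃ q ∈ causalFutureQ p, q ≠ p ∧ f q = f p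

/-- A special causal function on `S¹ × ℝ`: causal with dense set of strict values. -/
def IsSpecialCausalQ (f : S1 × ℝ → ℝ) : Prop :=
  IsCausalFunQ f ∧ Dense {a : ℝ | ¬ ∃ p : S1 × ℝ, IsNeutralPtQ f p ∧ f p = a}

/-- A half-turn moves a point of the circle. -/
lemma half_ne (θ : ℝ) : ((θ : S1)) ≠ (((θ + 1/2 : ℝ)) : S1) := by
  intro h
  rw [QuotientAddGroup.eq_iff_sub_mem, AddSubgroup.mem_zmultiples_iff] at h
  obtain ⟨n, hn⟩ := h
  simp at hn
  have h2 : (2 * n : ℤ) = (-1 : ℤ) := by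
    exact_mod_cast (by push_cast; linarith : ((2*n : ℤ) : ℝ) = ((-1 : ℤ) : ℝ))
  omega

lemma coe_add_one (x : ℝ) : ((x + 1 : ℝ) : S1) = (x : S1) :=
  AddCircle.coe_add_period 1 x

/-- Horizontal segments are causal curves. -/
lemma seg_future (y a b s t : ℝ) (hab : a < b) (hs : s ∈ Set.Icc a b)
    (ht : t ∈ Set.Icc a b) (hst : ((s : S1)) ≠ ((t : S1))) :
    (((b : S1), y) : S1 × ℝ) ∈ causalFutureQ ((a : S1), y) := by
  right
  refine ⟨a, b, hab, fun u => (u, y), ⟨⟨max 1 0, (LipschitzWith.id.prodMk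
    (LipschitzWith.const y)).lipschitzOnWith⟩, ?_⟩, rfl, rfl, s, hs, t, ht, ?_⟩
  · refine Filter.Eventually.of_forall fun u => ?_
    have h : HasDerivAt (fun u : ℝ => ((u, y) : ℝ × ℝ)) (1, 0) u :=
      (hasDerivAt_id u).prodMk (hasDerivAt_const u y)
    refine ⟨h.differentiableAt, ?_⟩
    rw [h.deriv]
    exact Or.inr ⟨zero_le_one, le_refl 0, by simp⟩
  · simpa [pr, Prod.ext_iff] using hst

/-- Causal functions do not depend on the angle (one inequality). -/
lemma le_angle (f : S1 × ℝ → ℝ) (hf : IsCausalFunQ f) (a b y : ℝ) (hab : a < b) :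
    f ((a : S1), y) ≤ f ((b : S1), y) := by
  by_cases hc : ((a : S1)) = ((b : S1))
  · rw [hc]
  · exact hf.2 _ _ (seg_future y a b a b hab ⟨le_refl a, hab.le⟩ ⟨hab.le, le_refl b⟩ hc)

/-- Causal functions do not depend on the angle. -/
lemma angle_indep (f : S1 × ℝ → ℝ) (hf : IsCausalFunQ f) (a b y : ℝ) :
    f ((a : S1), y) = f ((b : S1), y) := by
  -- use b + n > a and a + m > b + n with matching circle points
  obtain ⟨n, hn⟩ := exists_nat_gt (a - b)
  obtain ⟨m, hm⟩ := exists_nat_gt (b + n - a)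
  have key : ∀ (x : ℝ) (k : ℕ), ((x + k : ℝ) : S1) = (x : S1) := by
    intro x k
    induction k with
    | zero => simp
    | succ k ih => push_cast; rw [show x + ((k : ℝ) + 1) = (x + k) + 1 by ring,
        coe_add_one, ih]
  have h1 : f ((a : S1), y) ≤ f ((b : S1), y) := by
    have := le_angle f hf a (b + n) y (by linarith)
    rwa [show ((b + n : ℝ) : S1) = (b : S1) from key b n] at this
  have h2 : f ((b : S1), y) ≤ f ((a : S1), y) := by
    have := le_angle f hf (b + n) (a + m) y (by linarith)
    rwa [key b n, key a m] at this
  linarith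

/-- Every point is neutral for a causal function on `S¹ × ℝ`. -/
lemma all_neutral (f : S1 × ℝ → ℝ) (hf : IsCausalFunQ f) (p : S1 × ℝ) :
    IsNeutralPtQ f p := by
  obtain ⟨pθ, py⟩ := p
  obtain ⟨θ, hθ⟩ := QuotientAddGroup.mk_surjective pθ
  subst hθ
  refine ⟨(((θ + 1/2 : ℝ) : S1), py), ?_, ?_, ?_⟩
  · exact seg_future py θ (θ + 1/2) θ (θ + 1/2) (by linarith)
      ⟨le_refl θ, by linarith⟩ ⟨by linarith, le_refl _⟩ (half_ne θ)
  · intro h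
    exact half_ne θ (congrArg Prod.fst h).symm
  · exact angle_indep f hf (θ + 1/2) θ py

/-- On `S¹ × ℝ` a causal function is special causal iff it is constant. -/
theorem specialCausal_iff_constant (f : S1 × ℝ → ℝ) (hf : IsCausalFunQ f) :
    IsSpecialCausalQ f ↔ ∃ c : ℝ, ∀ p : S1 × ℝ, f p = c := by
  have hS : {a : ℝ | ¬ ∃ p : S1 × ℝ, IsNeutralPtQ f p ∧ f p = a} = (Set.range f)ᶜ := by
    ext a
    simp only [mem_setOf_eq, mem_compl_iff, mem_range]
    constructor
    · rintro h ⟨p, hp⟩; exact h ⟨p, all_neutral f hf p, hp⟩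
    · rintro h ⟨p, _, hp⟩; exact h ⟨p, hp⟩
  constructor
  · rintro ⟨-, hd⟩
    rw [hS] at hd
    refine ⟨f ((0 : ℝ), 0), fun p => ?_⟩
    obtain ⟨θ, hθ⟩ := QuotientAddGroup.mk_surjective p.1
    have h1 : f p = f ((0 : ℝ), p.2) := by
      conv_lhs => rw [show p = (p.1, p.2) from rfl, ← hθ]
      exact angle_indep f hf θ 0 p.2
    by_contra hne
    rw [h1] at hne
    -- intermediate value on the vertical line
    set g : ℝ → ℝ := fun y => f ((0 : ℝ), y) with hg
    have hgc : Continuous g := hf.1.comp (by continuity)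
    have hiv : Set.uIcc (g p.2) (g 0) ⊆ Set.range f := by
      intro z hz
      have := intermediate_value_uIcc (a := p.2) (b := 0) hgc.continuousOn hz
      obtain ⟨y, _, hy⟩ := this
      exact ⟨((0 : ℝ), y), hy⟩
    have hne' : g p.2 ≠ g 0 := hne
    have : Set.Ioo (min (g p.2) (g 0)) (max (g p.2) (g 0)) ⊆ Set.range f := fun z hz =>
      hiv ⟨le_of_lt hz.1, le_of_lt hz.2⟩
    have hlt : min (g p.2) (g 0) < max (g p.2) (g 0) := min_lt_max.mpr hne'
    obtain ⟨z, hzS, hz⟩ := hd.exists_mem_open isOpen_Ioo (Set.nonempty_Ioo.mpr hlt)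
    exact (hzS : z ∉ Set.range f) (this hz)
  · rintro ⟨c, hc⟩
    refine ⟨hf, ?_⟩
    rw [hS]
    have : Set.range f ⊆ {c} := by rintro z ⟨p, rfl⟩; exact hc p
    exact (dense_compl_singleton c).mono (compl_subset_compl.mpr this)

end
end
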